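/- Let P(λ,ζ) = P₀(ζ)·∏_{α=1}^{l}(λ − λ_α(ζ))^{n_α} be a polynomial in λ of degree n = n₁+⋯+n_l with polynomial coefficients in ζ, and suppose ĝ is a formal power series with P₀(∂_{m₂,z})ĝ = f̂. Then the Cauchy problem P(∂_{m₁,t},∂_{m₂,z})û = f̂, ∂^j_{m₁,t}û(0,z) = 0 for j = 0,…,n−1, has exactly one formal power series solution û that additionally satisfies ∏_{α=1}^{l}(∂_{m₁,t} − λ_α(∂_{m₂,z}))^{n_α} û = ĝ; i.e., the auxiliary problem ∏(∂_{m₁,t} − λ_α)^{n_α} û = ĝ with the same vanishing initial data has a unique formal solution, and every such solution solves the original problem. -/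
import Mathlib


/-- The lift of an operator `T` on the space `V` of formal series in `z` to the space
`ℕ → V` of formal series in `t` with coefficients in `V`, acting coefficientwise. -/
noncomputable def liftOp (V : Type*) [AddCommGroup V] [Module ℂ V]
    (T : Module.End ℂ V) : Module.End ℂ (ℕ → V) where
  toFun u := fun j => T (u j)
  map_add' u v := by funext j; simp
  map_smul' c u := by funext j; simp

/-- The moment differentiation `∂_{m₁,t}` acting on `u`-coefficient sequences is the
shift `u_j ↦ u_{j+1}`. -/
noncomputable def shiftOp (V : Type*) [AddCommGroup V] [Module ℂ V] :
    Module.End ℂ (ℕ → V) where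
  toFun u := fun j => u (j + 1)
  map_add' u v := by funext j; simp
  map_smul' c u := by funext j; simp

open Polynomial

section Aux

variable (V : Type*) [AddCommGroup V] [Module ℂ V]

lemma liftOp_apply (T : Module.End ℂ V) (u : ℕ → V) (j : ℕ) :
    liftOp V T u j = T (u j) := rfl

lemma shiftOp_apply (u : ℕ → V) (j : ℕ) : shiftOp V u j = u (j + 1) := rfl

lemma shiftOp_pow_apply (i : ℕ) (u : ℕ → V) (j : ℕ) :
    (shiftOp V ^ i) u j = u (j + i) := by
  induction i generalizing j with
  | zero => rfl
  | succ k ih =>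
      rw [pow_succ']
      show shiftOp V ((shiftOp V ^ k) u) j = _
      rw [shiftOp_apply, ih]
      exact congrArg u (by omega)

/-- `liftOp` as a ring homomorphism. -/
noncomputable def liftHom : Module.End ℂ V →+* Module.End ℂ (ℕ → V) where
  toFun := liftOp V
  map_one' := by ext u j; rfl
  map_mul' T T' := by ext u j; rfl
  map_zero' := by ext u j; rfl
  map_add' T T' := by ext u j; rfl

lemma commute_lift_shift (T : Module.End ℂ V) :
    Commute (liftHom V T) (shiftOp V) := by
  show _ * _ = _ * _
  ext u j
  rfl

/-- Evaluation of an `End ℂ V`-coefficient polynomial at the shift operator. -/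
noncomputable def phi : Polynomial (Module.End ℂ V) →+* Module.End ℂ (ℕ → V) :=
  eval₂RingHom' (liftHom V) (shiftOp V) (commute_lift_shift V)

lemma phi_apply_of_lt (p : Polynomial (Module.End ℂ V)) (N : ℕ) (hN : p.natDegree < N)
    (u : ℕ → V) (j : ℕ) :
    phi V p u j = ∑ i ∈ Finset.range N, p.coeff i (u (j + i)) := by
  have h1 : phi V p = ∑ i ∈ Finset.range N, liftHom V (p.coeff i) * shiftOp V ^ i := by
    show eval₂ (liftHom V) (shiftOp V) p = _
    rw [eval₂_eq_sum_range' (liftHom V) hN (shiftOp V)]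
  rw [h1]
  rw [LinearMap.coe_sum, Finset.sum_apply, Finset.sum_apply]
  refine Finset.sum_congr rfl fun i _ => ?_
  show liftHom V (p.coeff i) ((shiftOp V ^ i) u) j = _
  rw [show liftHom V (p.coeff i) = liftOp V (p.coeff i) from rfl, liftOp_apply,
    shiftOp_pow_apply]

lemma phi_monic_apply (p : Polynomial (Module.End ℂ V)) (hp : p.Monic)
    (u : ℕ → V) (j : ℕ) :
    phi V p u j = u (j + p.natDegree)
      + ∑ i ∈ Finset.range p.natDegree, p.coeff i (u (j + i)) := by
  rw [phi_apply_of_lt V p (p.natDegree + 1) (Nat.lt_succ_self _) u j,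
    Finset.sum_range_succ, hp.coeff_natDegree]
  show _ + LinearMap.id (u (j + p.natDegree)) = _
  rw [LinearMap.id_apply, add_comm]

/-- The recursively defined solution of the monic Cauchy problem. -/
noncomputable def sol (n : ℕ) (c : ℕ → Module.End ℂ V) (g : ℕ → V) : ℕ → V
  | j =>
    if h : j < n then 0
    else g (j - n) - ∑ i : Fin n, c i (sol n c g ((j - n) + i))
  termination_by j => j
  decreasing_by
    have := i.isLt
    omega

lemma sol_of_lt (n : ℕ) (c : ℕ → Module.End ℂ V) (g : ℕ → V) {j : ℕ} (h : j < n) :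
    sol V n c g j = 0 := by
  rw [sol, dif_pos h]

lemma sol_add (n : ℕ) (c : ℕ → Module.End ℂ V) (g : ℕ → V) (k : ℕ) :
    sol V n c g (k + n)
      = g k - ∑ i ∈ Finset.range n, c i (sol V n c g (k + i)) := by
  rw [sol, dif_neg (by omega)]
  simp only [Nat.add_sub_cancel]
  rw [Finset.sum_range fun i => c i (sol V n c g (k + i))]

/-- Unique solvability of the Cauchy problem for a monic operator polynomial. -/
theorem monic_cauchy (p : Polynomial (Module.End ℂ V)) (hp : p.Monic) (g : ℕ → V) :
    ∃! u : ℕ → V, phi V p u = g ∧ ∀ j < p.natDegree, u j = 0 := by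
  set n := p.natDegree with hn
  set c : ℕ → Module.End ℂ V := p.coeff with hc
  refine ⟨sol V n c g, ⟨?_, fun j hj => sol_of_lt V n c g hj⟩, ?_⟩
  · funext k
    rw [phi_monic_apply V p hp, ← hn, sol_add]
    simp only [hc]
    abel
  · rintro u ⟨hu, hu0⟩
    funext j
    induction j using Nat.strong_induction_on with
    | _ j ih =>
      by_cases h : j < n
      · rw [hu0 j h, sol_of_lt V n c g h]
      · have hk : j = (j - n) + n := by omega
        set k := j - n with hk2
        have h1 : u (k + n) = g k - ∑ i ∈ Finset.range n, c i (u (k + i)) := by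
          have := congrFun hu k
          rw [phi_monic_apply V p hp, ← hn] at this
          simp only [hc, eq_sub_iff_add_eq]
          exact this
        rw [hk, h1, sol_add]
        congr 1
        refine Finset.sum_congr rfl fun i hi => ?_
        rw [ih (k + i) (by simp only [Finset.mem_range] at hi; omega)]

lemma list_monic_prod {R : Type*} [Ring R] (L : List (Polynomial R))
    (hL : ∀ q ∈ L, q.Monic) :
    L.prod.Monic ∧ L.prod.natDegree = (L.map natDegree).sum := by
  induction L with
  | nil => simp [monic_one]
  | cons q L ih =>
    have hq : q.Monic := hL q (by simp)
    have hL' : ∀ r ∈ L, r.Monic := fun r hr => hL r (by simp [hr])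
    obtain ⟨h1, h2⟩ := ih hL'
    refine ⟨by simpa using hq.mul h1, ?_⟩
    simp [hq.natDegree_mul h1, h2]

/-- For `P = P₀·∏(λ−λ_α)^{n_α}` and `ĝ` with `P₀(∂_{m₂,z})ĝ = f̂`: the auxiliary
problem `∏(∂_{m₁,t} − λ_α(∂_{m₂,z}))^{n_α} û = ĝ` with vanishing initial data has a
unique formal solution, and every such solution solves the original Cauchy problem
`P(∂_{m₁,t},∂_{m₂,z})û = f̂` with the same vanishing initial data. -/
theorem factored_cauchy_problem' (l : ℕ) (Λ : Fin l → Module.End ℂ V) (nn : Fin l → ℕ)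
    (P₀ : Module.End ℂ V) (f g : ℕ → V) (hg : ∀ j, P₀ (g j) = f j) :
    (∃! u : ℕ → V,
      (List.ofFn fun α => (shiftOp V - liftOp V (Λ α)) ^ nn α).prod u = g ∧
      ∀ j < ∑ α, nn α, u j = 0) ∧
    (∀ u : ℕ → V,
      ((List.ofFn fun α => (shiftOp V - liftOp V (Λ α)) ^ nn α).prod u = g ∧
        ∀ j < ∑ α, nn α, u j = 0) →
      (liftOp V P₀) ((List.ofFn fun α => (shiftOp V - liftOp V (Λ α)) ^ nn α).prod u) = f ∧
      ∀ j < ∑ α, nn α, u j = 0) := by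
  constructor
  · -- existence and uniqueness
    by_cases hV : Subsingleton V
    · haveI := hV
      haveI : Subsingleton (ℕ → V) := by infer_instance
      exact ⟨g, ⟨Subsingleton.elim _ _, fun j _ => Subsingleton.elim _ _⟩,
        fun y _ => Subsingleton.elim _ _⟩
    · haveI : Nontrivial V := not_subsingleton_iff_nontrivial.mp hV
      haveI : Nontrivial (Module.End ℂ V) := by
        obtain ⟨v, hv⟩ := exists_ne (0 : V)
        exact ⟨1, 0, fun h => hv (by simpa using congrFun (congrArg DFunLike.coe h) v)⟩
      set Q : Polynomial (Module.End ℂ V) :=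
        (List.ofFn fun α => (X - C (Λ α)) ^ nn α).prod with hQ
      have hQmonic : Q.Monic ∧ Q.natDegree
          = ((List.ofFn fun α => (X - C (Λ α)) ^ nn α).map natDegree).sum := by
        apply list_monic_prod
        intro q hq
        simp only [List.mem_ofFn] at hq
        obtain ⟨α, rfl⟩ := hq
        exact (monic_X_sub_C (Λ α)).pow _
      have hdeg : Q.natDegree = ∑ α, nn α := by
        rw [hQmonic.2, List.map_ofFn]
        have : (natDegree ∘ fun α : Fin l => (X - C (Λ α)) ^ nn α)
            = fun α => nn α := by
          funext α
          simp only [Function.comp_apply]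
          rw [(monic_X_sub_C (Λ α)).natDegree_pow, natDegree_X_sub_C, mul_one]
        rw [this, List.sum_ofFn]
      have hphiQ : phi V Q
          = (List.ofFn fun α => (shiftOp V - liftOp V (Λ α)) ^ nn α).prod := by
        rw [hQ, map_list_prod, List.map_ofFn]
        refine congrArg List.prod (congrArg List.ofFn (funext fun α => ?_))
        simp only [Function.comp_apply]
        show phi V ((X - C (Λ α)) ^ nn α) = _
        rw [RingHom.map_pow, RingHom.map_sub]
        congr 2
        · exact eval₂_X _ _
        · exact eval₂_C _ _
      have := monic_cauchy V Q hQmonic.1 g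
      rw [hphiQ, hdeg] at this
      exact this
  · rintro u ⟨hu, hu0⟩
    refine ⟨?_, hu0⟩
    rw [hu]
    funext j
    rw [liftOp_apply, hg]

end Aux

/-- For `P = P₀·∏(λ−λ_α)^{n_α}` and `ĝ` with `P₀(∂_{m₂,z})ĝ = f̂`: the auxiliary
problem `∏(∂_{m₁,t} − λ_α(∂_{m₂,z}))^{n_α} û = ĝ` with vanishing initial data has a
unique formal solution, and every such solution solves the original Cauchy problem
`P(∂_{m₁,t},∂_{m₂,z})û = f̂` with the same vanishing initial data. -/
theorem factored_cauchy_problem (V : Type*) [AddCommGroup V] [Module ℂ V]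
    (l : ℕ) (Λ : Fin l → Module.End ℂ V) (nn : Fin l → ℕ)
    (hcomm : ∀ α γ : Fin l, Commute (Λ α) (Λ γ))
    (P₀ : Module.End ℂ V) (f g : ℕ → V) (hg : ∀ j, P₀ (g j) = f j) :
    (∃! u : ℕ → V,
      (List.ofFn fun α => (shiftOp V - liftOp V (Λ α)) ^ nn α).prod u = g ∧
      ∀ j < ∑ α, nn α, u j = 0) ∧
    (∀ u : ℕ → V,
      ((List.ofFn fun α => (shiftOp V - liftOp V (Λ α)) ^ nn α).prod u = g ∧
        ∀ j < ∑ α, nn α, u j = 0) →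
      (liftOp V P₀) ((List.ofFn fun α => (shiftOp V - liftOp V (Λ α)) ^ nn α).prod u) = f ∧
      ∀ j < ∑ α, nn α, u j = 0) :=
  factored_cauchy_problem' V l Λ nn P₀ f g hg
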